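/- Two broken lines in ℝ^d are rearrangements of one another if and only if they produce the same measure on P^{d-1}; moreover the measure produced by a broken line is necessarily a discrete measure (a finite linear combination of point masses). -/

import Mathlib

open MeasureTheory Set
open scoped RealInnerProductSpace ENNReal NNReal

noncomputable section

/-- Euclidean space `ℝ^d`. -/
abbrev Euc (d : ℕ) : Type := EuclideanSpace ℝ (Fin d)

/-- The unit sphere `S^{d-1}` in `ℝ^d`. -/
abbrev Sph (d : ℕ) : Type := Metric.sphere (0 : Euc d) 1

/-- The antipodal equivalence relation on the sphere. -/
def projRel (d : ℕ) : Setoid (Sph d) where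
  r x y := (x : Euc d) = (y : Euc d) ∨ (x : Euc d) = -(y : Euc d)
  iseqv := by
    refine ⟨fun x => Or.inl rfl, ?_, ?_⟩
    · rintro x y (h | h)
      · exact Or.inl h.symm
      · exact Or.inr (by rw [h, neg_neg])
    · rintro x y z (h1 | h1) (h2 | h2)
      · exact Or.inl (h1.trans h2)
      · exact Or.inr (h1.trans h2)
      · exact Or.inr (by rw [h1, h2])
      · exact Or.inl (by rw [h1, h2, neg_neg])

/-- Real projective space `P^{d-1}`, as the quotient of the sphere identifying
antipodal points. -/
abbrev Proj (d : ℕ) : Type := Quotient (projRel d)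

/-- The projection `π : S^{d-1} → P^{d-1}`. -/
def projQ {d : ℕ} (x : Sph d) : Proj d := Quotient.mk (projRel d) x

/-- The unit vector in the direction of a nonzero vector `v`. -/
def unitize {d : ℕ} (v : Euc d) (hv : v ≠ 0) : Sph d :=
  ⟨‖v‖⁻¹ • v, by
    rw [mem_sphere_zero_iff_norm, norm_smul, norm_inv, norm_norm,
      inv_mul_cancel₀ (norm_ne_zero_iff.mpr hv)]⟩

/-- The degree-1 homogeneous extension `f̂ : ℝ^d → ℝ` of a function
`f : P^{d-1} → ℝ`, determined by `f̂(rξ) = |r| f(π ξ)` for `ξ` on the sphere. -/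
def hext {d : ℕ} (f : Proj d → ℝ) (v : Euc d) : ℝ :=
  haveI := Classical.propDecidable (v = 0)
  if hv : v = 0 then 0 else ‖v‖ * f (projQ (unitize v hv))

/-- `IsACDeriv α g` : the curve `α` is absolutely continuous on `[0,1]`
with (a.e.) derivative `g`, i.e. `α` is the indefinite integral of the
integrable function `g`. -/
def IsACDeriv {V : Type*} [NormedAddCommGroup V] [NormedSpace ℝ V]
    (α g : ℝ → V) : Prop :=
  IntervalIntegrable g volume 0 1 ∧
  ∀ t ∈ Icc (0:ℝ) 1, α t = α 0 + ∫ s in (0:ℝ)..t, g s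

/-- `IsCurveMeasure g μ` : `μ` is the measure on projective space associated
(via the Riesz representation) to a curve with derivative `g`; it is the finite
Borel measure satisfying `∫ f dμ = ∫_0^1 f̂(g t) dt` for all continuous `f`. -/
def IsCurveMeasure {d : ℕ} (g : ℝ → Euc d) (μ : Measure (Proj d)) : Prop :=
  IsFiniteMeasure μ ∧
  ∀ f : Proj d → ℝ, Continuous f → ∫ x, f x ∂μ = ∫ t in (0:ℝ)..1, hext f (g t)

/-- `IsSubdivision L P` : the list of segments `P` is a decomposition of the
broken line with (directed) segment vectors `L`, obtained by subdividing each
segment `v` of `L` into consecutive subsegments `r • v` with positive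
coefficients `r` summing to `1`. -/
def IsSubdivision {d : ℕ} (L : List (Euc d)) (P : List (List (Euc d))) : Prop :=
  List.Forall₂ (fun v seg => ∃ c : List ℝ, (∀ r ∈ c, 0 < r) ∧ c.sum = 1 ∧
    seg = c.map (fun r => r • v)) L P

/-- Two broken lines (given by their lists of segment vectors) are
rearrangements of one another if they admit decompositions whose respective
segments are translates of one another (as undirected segments, i.e. up to
sign of the direction vector). -/
def Rearrangement {d : ℕ} (L₁ L₂ : List (Euc d)) : Prop :=
  ∃ P₁ P₂ : List (List (Euc d)), IsSubdivision L₁ P₁ ∧ IsSubdivision L₂ P₂ ∧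
    Multiset.Rel (fun v w => v = w ∨ v = -w)
      ((P₁.map (fun l => (l : Multiset (Euc d)))).sum)
      ((P₂.map (fun l => (l : Multiset (Euc d)))).sum)

section Topo

variable {d : ℕ}

/-- Negation on the sphere. -/
def negS (x : Sph d) : Sph d := ⟨-(x : Euc d), by
  have := x.2
  simpa [mem_sphere_zero_iff_norm] using this⟩

lemma continuous_negS : Continuous (negS (d := d)) :=
  Continuous.subtype_mk (continuous_subtype_val.neg) _

lemma projQ_negS (x : Sph d) : projQ (negS x) = projQ x :=
  Quotient.sound (Or.inr rfl)

lemma projQ_eq_iff {x y : Sph d} :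
    projQ x = projQ y ↔ ((x : Euc d) = y ∨ (x : Euc d) = -(y : Euc d)) :=
  ⟨fun h => Quotient.exact h, fun h => Quotient.sound h⟩

lemma continuous_projQ : Continuous (projQ (d := d)) := continuous_quotient_mk'

lemma projQ_surjective : Function.Surjective (projQ (d := d)) :=
  Quotient.exists_rep

lemma preimage_projQ_image (V : Set (Sph d)) :
    projQ ⁻¹' (projQ '' V) = V ∪ negS ⁻¹' V := by
  ext x
  constructor
  · rintro ⟨y, hy, hxy⟩
    rcases Quotient.exact hxy with h | h
    · left; rwa [show y = x from Subtype.ext h] at hy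
    · right
      have : y = negS x := Subtype.ext h
      rwa [this] at hy
  · rintro (hx | hx)
    · exact ⟨x, hx, rfl⟩
    · exact ⟨negS x, hx, projQ_negS x⟩

lemma isOpenMap_projQ : IsOpenMap (projQ (d := d)) := by
  intro V hV
  rw [isOpen_coinduced (f := (Quotient.mk (projRel d)))]
  show IsOpen (projQ ⁻¹' (projQ '' V))
  rw [preimage_projQ_image]
  exact hV.union (hV.preimage continuous_negS)

lemma dist_negS_negS (a b : Sph d) : dist (negS a) (negS b) = dist a b := by
  rw [Subtype.dist_eq, Subtype.dist_eq]
  show dist (-(a : Euc d)) (-(b : Euc d)) = _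
  rw [dist_neg_neg]

instance : T2Space (Proj d) := by
  constructor
  intro q₁ q₂ hne
  obtain ⟨x, rfl⟩ := projQ_surjective q₁
  obtain ⟨y, rfl⟩ := projQ_surjective q₂
  set f : Sph d → ℝ := fun z => min (dist z x) (dist z (negS x)) with hf
  have hfc : Continuous f := Continuous.min (continuous_id.dist continuous_const)
    (continuous_id.dist continuous_const)
  have hfsymm : ∀ z, f (negS z) = f z := by
    intro z
    have h1 : dist (negS z) x = dist z (negS x) := by
      rw [← dist_negS_negS z (negS x)]
      congr 1
      exact Subtype.ext (by simp [negS])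
    have h2 : dist (negS z) (negS x) = dist z x := dist_negS_negS z x
    simp [hf, h1, h2, min_comm]
  have hfy : 0 < f y := by
    have h1 : (x : Euc d) ≠ (y : Euc d) := fun h => hne (projQ_eq_iff.mpr (Or.inl h))
    have h2 : (x : Euc d) ≠ -(y : Euc d) := fun h => hne (projQ_eq_iff.mpr (Or.inr h))
    have hyx : y ≠ x := fun h => h1 (by rw [h])
    have hynx : y ≠ negS x := by
      intro h
      apply h2
      have : (y : Euc d) = -(x : Euc d) := by rw [h]; rfl
      rw [eq_comm, neg_eq_iff_eq_neg] at this
      rw [this]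
    simp only [hf, lt_min_iff]
    exact ⟨dist_pos.mpr hyx, dist_pos.mpr hynx⟩
  set c := f y with hc
  refine ⟨projQ '' (f ⁻¹' Iio (c / 2)), projQ '' (f ⁻¹' Ioi (c / 2)),
    isOpenMap_projQ _ (isOpen_Iio.preimage hfc), isOpenMap_projQ _ (isOpen_Ioi.preimage hfc),
    ⟨x, ?_, rfl⟩, ⟨y, ?_, rfl⟩, ?_⟩
  · show f x < c / 2
    have : f x ≤ 0 := by simp [hf]
    linarith
  · show c / 2 < f y
    rw [← hc]; linarith
  · rw [Set.disjoint_iff]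
    rintro q ⟨⟨z₁, hz₁, rfl⟩, ⟨z₂, hz₂, hz₂q⟩⟩
    have hz₁' : f z₁ < c / 2 := hz₁
    have hz₂' : c / 2 < f z₂ := hz₂
    rcases Quotient.exact hz₂q with h | h
    · rw [show z₂ = z₁ from Subtype.ext h] at hz₂'; linarith
    · have : z₂ = negS z₁ := Subtype.ext h
      rw [this, hfsymm] at hz₂'; linarith

end Topo
section Topo2

variable {d : ℕ}

instance : SecondCountableTopology (Proj d) :=
  TopologicalSpace.Quotient.secondCountableTopology (S := projRel d) isOpenMap_projQ

lemma subtype_val_image_compl {U : Set (Sph d)} (B : Set ↥U) :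
    (Subtype.val '' Bᶜ : Set (Sph d)) = U \ Subtype.val '' B := by
  ext x
  constructor
  · rintro ⟨y, hy, rfl⟩
    refine ⟨y.2, ?_⟩
    rintro ⟨y', hy', hval⟩
    exact hy (by rwa [show y' = y from Subtype.ext hval] at hy')
  · rintro ⟨hxU, hx⟩
    exact ⟨⟨x, hxU⟩, fun hB => hx ⟨⟨x, hxU⟩, hB, rfl⟩, rfl⟩

/-- The auxiliary σ-algebra on `↥U`: sets whose `projQ`-image is Borel downstairs. -/
def imSigma (U : Set (Sph d)) (hU : IsOpen U) (hinj : Set.InjOn projQ U) :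
    MeasurableSpace ↥U where
  MeasurableSet' B := MeasurableSet[borel (Proj d)] (projQ '' (Subtype.val '' B))
  measurableSet_empty := by simp
  measurableSet_compl := by
    intro B hB
    have h1 : (Subtype.val '' Bᶜ : Set (Sph d)) = U \ Subtype.val '' B :=
      subtype_val_image_compl B
    have h2 : projQ '' (U \ Subtype.val '' B) = projQ '' U \ projQ '' (Subtype.val '' B) :=
      Set.InjOn.image_diff_subset hinj (Subtype.coe_image_subset U B)
    show MeasurableSet[borel (Proj d)] (projQ '' (Subtype.val '' Bᶜ))
    rw [h1, h2]
    exact MeasurableSet.diff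
      (MeasurableSpace.measurableSet_generateFrom (isOpenMap_projQ U hU)) hB
  measurableSet_iUnion := by
    intro g hg
    show MeasurableSet[borel (Proj d)] _
    rw [Set.image_iUnion, Set.image_iUnion]
    exact MeasurableSet.iUnion hg

lemma measurableSet_image_inter {T U : Set (Sph d)} (hT : MeasurableSet T)
    (hU : IsOpen U) (hinj : Set.InjOn projQ U) :
    MeasurableSet[borel (Proj d)] (projQ '' (T ∩ U)) := by
  have hle : borel ↥U ≤ imSigma U hU hinj := by
    refine MeasurableSpace.generateFrom_le fun B hB => ?_
    rcases isOpen_induced_iff.mp hB with ⟨V, hV, rfl⟩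
    show MeasurableSet[borel (Proj d)] (projQ '' (Subtype.val '' (Subtype.val ⁻¹' V)))
    rw [Subtype.image_preimage_coe]
    exact MeasurableSpace.measurableSet_generateFrom (isOpenMap_projQ _ (hU.inter hV))
  have hT' : MeasurableSet[borel (Sph d)] T := by
    rwa [← BorelSpace.measurable_eq (α := Sph d)]
  have hsub : MeasurableSet[borel ↥U] ((Subtype.val : ↥U → Sph d) ⁻¹' T) := by
    have hb : borel ↥U = (borel (Sph d)).comap (Subtype.val : ↥U → Sph d) := borel_comap
    rw [hb]
    exact ⟨T, hT', rfl⟩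
  have := hle _ hsub
  have himg : ((Subtype.val : ↥U → Sph d) '' ((Subtype.val : ↥U → Sph d) ⁻¹' T)) = T ∩ U := by
    rw [Subtype.image_preimage_coe, Set.inter_comm]
  show MeasurableSet[borel (Proj d)] (projQ '' (T ∩ U))
  rw [← himg]
  exact this

instance : BorelSpace (Proj d) := by
  constructor
  refine le_antisymm ?_ ?_
  · -- map σ-algebra ≤ borel
    intro S hS
    have hT : MeasurableSet (projQ ⁻¹' S) := hS
    set T := projQ ⁻¹' S with hTdef
    have hcov : S = ⋃ i : Fin d, projQ '' (T ∩ {z : Sph d | 0 < (z : Euc d) i}) := by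
      ext q
      constructor
      · intro hq
        obtain ⟨z, rfl⟩ := projQ_surjective q
        have hz : z ∈ T := hq
        have hz0 : (z : Euc d) ≠ 0 := by
          intro h0
          have := z.2
          rw [mem_sphere_zero_iff_norm, h0, norm_zero] at this
          norm_num at this
        obtain ⟨i, hi⟩ : ∃ i, (z : Euc d) i ≠ 0 := by
          by_contra hcon
          push_neg at hcon
          exact hz0 (by ext j; simpa using hcon j)
        rcases hi.lt_or_gt with hneg | hpos
        · refine Set.mem_iUnion.mpr ⟨i, ⟨negS z, ⟨?_, ?_⟩, projQ_negS z⟩⟩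
          · show projQ (negS z) ∈ S
            rw [projQ_negS]; exact hq
          · show 0 < (-(z : Euc d)) i
            simpa using hneg
        · exact Set.mem_iUnion.mpr ⟨i, ⟨z, ⟨hz, hpos⟩, rfl⟩⟩
      · intro hq
        rcases Set.mem_iUnion.mp hq with ⟨i, z, ⟨hzT, _⟩, rfl⟩
        exact hzT
    rw [hcov]
    refine MeasurableSet.iUnion fun i => ?_
    refine measurableSet_image_inter hT ?_ ?_
    · have hcont : Continuous fun z : Sph d => (z : Euc d) i :=
        (EuclideanSpace.proj (𝕜 := ℝ) i).continuous.comp continuous_subtype_val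
      exact isOpen_Ioi.preimage hcont
    · intro a ha b hb hab
      rcases projQ_eq_iff.mp hab with h | h
      · exact Subtype.ext h
      · exfalso
        have : (a : Euc d) i = -((b : Euc d) i) := by rw [h]; rfl
        have hbpos : (0:ℝ) < (b : Euc d) i := hb
        have hapos : (0:ℝ) < (a : Euc d) i := ha
        rw [this] at hapos
        linarith
  · -- borel ≤ map σ-algebra
    refine MeasurableSpace.generateFrom_le fun U hU => ?_
    show MeasurableSet (projQ ⁻¹' U)
    exact (hU.preimage continuous_projQ).measurableSet

example : HasOuterApproxClosed (Proj d) := inferInstance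
example : MeasurableSingletonClass (Proj d) := inferInstance

end Topo2
section Hext
open Classical

variable {d : ℕ}

lemma hext_zero (f : Proj d → ℝ) : hext f 0 = 0 := by
  rw [hext]
  exact dif_pos rfl

lemma hext_of_ne (f : Proj d → ℝ) {v : Euc d} (hv : v ≠ 0) :
    hext f v = ‖v‖ * f (projQ (unitize v hv)) := by
  rw [hext]
  exact dif_neg hv

lemma unitize_coe {v : Euc d} (hv : v ≠ 0) : (unitize v hv : Euc d) = ‖v‖⁻¹ • v := rfl

lemma projQ_unitize_smul {v : Euc d} (hv : v ≠ 0) {r : ℝ} (hr : r ≠ 0)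
    (h' : r • v ≠ 0 := smul_ne_zero hr hv) :
    projQ (unitize (r • v) h') = projQ (unitize v hv) := by
  apply projQ_eq_iff.mpr
  rcases hr.lt_or_gt with hneg | hpos
  · right
    rw [unitize_coe, unitize_coe, norm_smul, smul_smul, ← neg_smul]
    congr 1
    rw [Real.norm_eq_abs, abs_of_neg hneg]
    rw [mul_inv, inv_neg, neg_mul, neg_mul, neg_inj, mul_comm r⁻¹, mul_assoc,
      inv_mul_cancel₀ hr, mul_one]
  · left
    rw [unitize_coe, unitize_coe, norm_smul, smul_smul]
    congr 1
    rw [Real.norm_eq_abs, abs_of_pos hpos]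
    rw [mul_inv, mul_comm r⁻¹, mul_assoc, inv_mul_cancel₀ hr, mul_one]

lemma hext_smul (f : Proj d → ℝ) (v : Euc d) (r : ℝ) :
    hext f (r • v) = |r| * hext f v := by
  rcases eq_or_ne v 0 with rfl | hv
  · rw [smul_zero, hext_zero, mul_zero]
  rcases eq_or_ne r 0 with rfl | hr
  · rw [zero_smul, hext_zero, abs_zero, zero_mul]
  have h' : r • v ≠ 0 := smul_ne_zero hr hv
  rw [hext_of_ne f h', hext_of_ne f hv, projQ_unitize_smul hv hr h', norm_smul,
    Real.norm_eq_abs, mul_assoc]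

lemma hext_neg (f : Proj d → ℝ) (v : Euc d) : hext f (-v) = hext f v := by
  have : -v = (-1 : ℝ) • v := by rw [neg_smul, one_smul]
  rw [this, hext_smul]
  norm_num

lemma hext_nonneg {f : Proj d → ℝ} (hf : ∀ p, 0 ≤ f p) (v : Euc d) : 0 ≤ hext f v := by
  rcases eq_or_ne v 0 with rfl | hv
  · rw [hext_zero]
  · rw [hext_of_ne f hv]
    exact mul_nonneg (norm_nonneg v) (hf _)

/-- The indicator function of a point of projective space. -/
def chi (q : Proj d) : Proj d → ℝ := fun p => if p = q then 1 else 0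

lemma chi_nonneg (q p : Proj d) : 0 ≤ chi q p := by
  rw [chi]; split <;> norm_num

lemma hext_chi {v : Euc d} (hv : v ≠ 0) (q : Proj d) :
    hext (chi q) v = if projQ (unitize v hv) = q then ‖v‖ else 0 := by
  rw [hext_of_ne _ hv, chi]
  split <;> simp

/-- The total mass of a broken line in a given projective direction. -/
def mass (L : List (Euc d)) (q : Proj d) : ℝ := (L.map (hext (chi q))).sum

lemma mass_nil (q : Proj d) : mass ([] : List (Euc d)) q = 0 := rfl

lemma mass_cons (v : Euc d) (L : List (Euc d)) (q : Proj d) :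
    mass (v :: L) q = hext (chi q) v + mass L q := by
  rw [mass, mass, List.map_cons, List.sum_cons]

lemma mass_append (L₁ L₂ : List (Euc d)) (q : Proj d) :
    mass (L₁ ++ L₂) q = mass L₁ q + mass L₂ q := by
  rw [mass, mass, mass, List.map_append, List.sum_append]

lemma mass_nonneg (L : List (Euc d)) (q : Proj d) : 0 ≤ mass L q := by
  apply List.sum_nonneg
  intro x hx
  rcases List.mem_map.mp hx with ⟨v, _, rfl⟩
  exact hext_nonneg (chi_nonneg q) v

end Hext
section StepIntegral

variable {d : ℕ}

lemma step_intervalIntegral {m : ℕ} (hm : 0 < m) (g : ℝ → Euc d) (V : Fin m → Euc d)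
    (hg : ∀ k : Fin m, ∀ t ∈ Ioo ((k : ℝ) / (m : ℝ)) (((k : ℝ) + 1) / (m : ℝ)),
      g t = V k) (F : Euc d → ℝ) :
    ∫ t in (0:ℝ)..1, F (g t) = ∑ k : Fin m, (1 / (m : ℝ)) * F (V k) := by
  have hm' : (m : ℝ) ≠ 0 := Nat.cast_ne_zero.mpr hm.ne'
  have hmpos : (0:ℝ) < m := Nat.cast_pos.mpr hm
  set a : ℕ → ℝ := fun i => (i : ℝ) / m with ha
  have hale : ∀ i : ℕ, a i ≤ a (i + 1) := by
    intro i
    show (i : ℝ) / m ≤ ((i + 1 : ℕ) : ℝ) / m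
    gcongr
    · push_cast; linarith
  have hcast : ∀ k : ℕ, a (k + 1) = ((k : ℝ) + 1) / m := by
    intro k; rw [ha]; push_cast; ring
  have key : ∀ (k : ℕ) (hk : k < m),
      ∀ᵐ t : ℝ, t ∈ Set.uIoc (a k) (a (k + 1)) → F (g t) = F (V ⟨k, hk⟩) := by
    intro k hk
    have hne : ∀ᵐ t : ℝ, t ∉ ({a (k + 1)} : Set ℝ) :=
      (Set.countable_singleton _).ae_notMem volume
    filter_upwards [hne] with t ht htI
    rw [Set.uIoc_of_le (hale k)] at htI
    have ht' : t ≠ a (k + 1) := fun h => ht (by simp [h])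
    have htOo : t ∈ Ioo (a k) (a (k + 1)) := ⟨htI.1, lt_of_le_of_ne htI.2 ht'⟩
    have hmem : t ∈ Ioo (((⟨k, hk⟩ : Fin m) : ℝ) / m) ((((⟨k, hk⟩ : Fin m) : ℝ) + 1) / m) := by
      refine Set.mem_Ioo.mpr ⟨htOo.1, ?_⟩
      rw [← hcast k]
      exact htOo.2
    rw [hg ⟨k, hk⟩ t hmem]
  have hint : ∀ k, k < m → IntervalIntegrable (fun t => F (g t)) volume (a k) (a (k + 1)) := by
    intro k hk
    rw [intervalIntegrable_iff]
    have heq : (fun t => F (g t)) =ᵐ[volume.restrict (Set.uIoc (a k) (a (k+1)))]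
        fun _ => F (V ⟨k, hk⟩) :=
      (ae_restrict_iff' measurableSet_uIoc).2 (key k hk)
    have hfin : volume (Set.uIoc (a k) (a (k+1))) < ⊤ := by
      rw [Set.uIoc]; exact measure_Ioc_lt_top
    exact (integrableOn_const hfin.ne).congr heq.symm
  have hb0 : a 0 = 0 := by simp [ha]
  have hbm : a m = 1 := by rw [ha]; field_simp
  calc ∫ t in (0:ℝ)..1, F (g t)
      = ∫ t in (a 0)..(a m), F (g t) := by rw [hb0, hbm]
    _ = ∑ k ∈ Finset.range m, ∫ t in a k..a (k+1), F (g t) :=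
        (intervalIntegral.sum_integral_adjacent_intervals hint).symm
    _ = ∑ k ∈ Finset.range m,
          (if h : k < m then (1 / (m:ℝ)) * F (V ⟨k, h⟩) else 0) := by
        refine Finset.sum_congr rfl fun k hk => ?_
        rw [dif_pos (Finset.mem_range.mp hk)]
        rw [intervalIntegral.integral_congr_ae (key k (Finset.mem_range.mp hk))]
        rw [intervalIntegral.integral_const]
        have hlen : a (k+1) - a k = 1 / m := by
          rw [hcast k, ha]; field_simp; ring
        rw [hlen, smul_eq_mul]
    _ = ∑ k : Fin m, (1 / (m : ℝ)) * F (V k) := by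
        rw [Finset.sum_range]
        refine Finset.sum_congr rfl fun k _ => ?_
        rw [dif_pos k.isLt]

end StepIntegral
section CurveMeasure

variable {d : ℕ}

lemma curve_integral {m : ℕ} (hm : 0 < m) (g : ℝ → Euc d) (V : Fin m → Euc d)
    (hg : ∀ k : Fin m, ∀ t ∈ Ioo ((k : ℝ) / (m : ℝ)) (((k : ℝ) + 1) / (m : ℝ)),
      g t = (m : ℝ) • V k)
    {μ : Measure (Proj d)} (hμ : IsCurveMeasure g μ)
    (f : Proj d → ℝ) (hf : Continuous f) :
    ∫ x, f x ∂μ = ∑ k : Fin m, hext f (V k) := by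
  rw [hμ.2 f hf]
  rw [step_intervalIntegral hm g (fun k => (m : ℝ) • V k) hg (hext f)]
  refine Finset.sum_congr rfl fun k _ => ?_
  rw [hext_smul, abs_of_pos (by positivity : (0:ℝ) < (m:ℝ))]
  field_simp

/-- The discrete measure associated to a finite family of nonzero vectors. -/
def dirM {m : ℕ} (V : Fin m → Euc d) (hV : ∀ k, V k ≠ 0) : Measure (Proj d) :=
  ∑ k : Fin m, (‖V k‖₊ : ℝ≥0∞) • Measure.dirac (projQ (unitize (V k) (hV k)))

lemma isFiniteMeasure_dirM {m : ℕ} (V : Fin m → Euc d) (hV : ∀ k, V k ≠ 0) :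
    IsFiniteMeasure (dirM V hV) := by
  constructor
  rw [dirM, Measure.finset_sum_apply]
  refine ENNReal.sum_lt_top.mpr fun k _ => ?_
  rw [Measure.smul_apply, smul_eq_mul]
  exact ENNReal.mul_lt_top ENNReal.coe_lt_top (measure_lt_top _ _)

lemma lintegral_dirM {m : ℕ} (V : Fin m → Euc d) (hV : ∀ k, V k ≠ 0)
    (f : Proj d → ℝ≥0∞) :
    ∫⁻ x, f x ∂(dirM V hV) =
      ∑ k : Fin m, (‖V k‖₊ : ℝ≥0∞) * f (projQ (unitize (V k) (hV k))) := by
  rw [dirM, lintegral_finset_sum_measure]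
  refine Finset.sum_congr rfl fun k _ => ?_
  rw [lintegral_smul_measure, lintegral_dirac, smul_eq_mul]

/-- The measure of a piecewise-linear curve is the associated discrete measure. -/
lemma curveMeasure_eq_dirM {m : ℕ} (hm : 0 < m) (g : ℝ → Euc d) (V : Fin m → Euc d)
    (hV : ∀ k, V k ≠ 0)
    (hg : ∀ k : Fin m, ∀ t ∈ Ioo ((k : ℝ) / (m : ℝ)) (((k : ℝ) + 1) / (m : ℝ)),
      g t = (m : ℝ) • V k)
    {μ : Measure (Proj d)} (hμ : IsCurveMeasure g μ) :
    μ = dirM V hV := by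
  haveI : IsFiniteMeasure μ := hμ.1
  haveI := isFiniteMeasure_dirM V hV
  apply MeasureTheory.ext_of_forall_lintegral_eq_of_IsFiniteMeasure
  intro f
  have hint : Integrable (((↑) : ℝ≥0 → ℝ) ∘ ⇑f) μ := f.integrable_of_nnreal μ
  rw [lintegral_coe_eq_integral _ hint]
  have hfc : Continuous fun p : Proj d => ((f p : ℝ)) := NNReal.continuous_coe.comp f.continuous
  rw [curve_integral hm g V hg hμ _ hfc]
  rw [lintegral_dirM]
  rw [ENNReal.ofReal_sum_of_nonneg (s := Finset.univ)
    (f := fun k : Fin m => hext (fun p => ((f p : ℝ))) (V k))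
    (fun k _ => hext_nonneg (fun p => (f p).2) _)]
  refine Finset.sum_congr rfl fun k _ => ?_
  rw [hext_of_ne _ (hV k), ENNReal.ofReal_mul (norm_nonneg _), ENNReal.ofReal_coe_nnreal,
    ofReal_norm, enorm_eq_nnnorm]

end CurveMeasure
section Pieces

variable {d : ℕ}

/-- Equality up to sign. -/
abbrev SEq (v w : Euc d) : Prop := v = w ∨ v = -w

/-- The multiset of all pieces in a decomposition. -/
def pieces (P : List (List (Euc d))) : Multiset (Euc d) :=
  (P.map (fun l => (l : Multiset (Euc d)))).sum

lemma pieces_nil : pieces ([] : List (List (Euc d))) = 0 := rfl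

lemma pieces_cons (s : List (Euc d)) (P : List (List (Euc d))) :
    pieces (s :: P) = (s : Multiset (Euc d)) + pieces P := by
  simp [pieces]

lemma pieces_append (P₁ P₂ : List (List (Euc d))) :
    pieces (P₁ ++ P₂) = pieces P₁ + pieces P₂ := by
  simp [pieces]

lemma list_sum_map_mul (c : List ℝ) (x : ℝ) :
    (c.map (fun r => r * x)).sum = c.sum * x := by
  induction c with
  | nil => simp
  | cons a c ih => simp [ih, add_mul]

lemma hext_sum_seg {v : Euc d} {seg : List (Euc d)} (f : Proj d → ℝ)
    (h : ∃ c : List ℝ, (∀ r ∈ c, 0 < r) ∧ c.sum = 1 ∧ seg = c.map (fun r => r • v)) :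
    (seg.map (hext f)).sum = hext f v := by
  obtain ⟨c, hcpos, hcsum, rfl⟩ := h
  rw [List.map_map]
  have : (c.map (hext f ∘ fun r => r • v)) = c.map (fun r => r * hext f v) := by
    refine List.map_congr_left fun r hr => ?_
    show hext f (r • v) = r * hext f v
    rw [hext_smul, abs_of_pos (hcpos r hr)]
  rw [this, list_sum_map_mul, hcsum, one_mul]

lemma hext_sum_sub {L : List (Euc d)} {P : List (List (Euc d))}
    (h : IsSubdivision L P) (f : Proj d → ℝ) :
    ((pieces P).map (hext f)).sum = (L.map (hext f)).sum := by
  induction h with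
  | nil => simp [pieces_nil]
  | @cons v seg L P hseg h ih =>
      rw [pieces_cons, Multiset.map_add, Multiset.sum_add, List.map_cons, List.sum_cons, ih]
      congr 1
      rw [show ((seg : Multiset (Euc d)).map (hext f)).sum = (seg.map (hext f)).sum by
        simp]
      exact hext_sum_seg f hseg

lemma hext_SEq (f : Proj d → ℝ) {v w : Euc d} (h : SEq v w) : hext f v = hext f w := by
  rcases h with rfl | rfl
  · rfl
  · exact hext_neg f w

lemma rel_sum_hext {f : Proj d → ℝ} {s t : Multiset (Euc d)}
    (h : Multiset.Rel SEq s t) : (s.map (hext f)).sum = (t.map (hext f)).sum := by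
  induction h with
  | zero => simp
  | @cons a b as bs hab _ ih =>
      rw [Multiset.map_cons, Multiset.map_cons, Multiset.sum_cons, Multiset.sum_cons, ih,
        hext_SEq f hab]

lemma sum_hext_of_rearrangement {L₁ L₂ : List (Euc d)} (h : Rearrangement L₁ L₂)
    (f : Proj d → ℝ) : (L₁.map (hext f)).sum = (L₂.map (hext f)).sum := by
  obtain ⟨P₁, P₂, h₁, h₂, hrel⟩ := h
  rw [← hext_sum_sub h₁ f, ← hext_sum_sub h₂ f]
  exact rel_sum_hext hrel

lemma sum_ofFn_hext {m : ℕ} (V : Fin m → Euc d) (f : Proj d → ℝ) :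
    ((List.ofFn V).map (hext f)).sum = ∑ k : Fin m, hext f (V k) := by
  rw [List.map_ofFn, List.sum_ofFn]
  rfl

lemma mass_ofFn {m : ℕ} (V : Fin m → Euc d) (q : Proj d) :
    mass (List.ofFn V) q = ∑ k : Fin m, hext (chi q) (V k) :=
  sum_ofFn_hext V (chi q)

lemma dirM_singleton {m : ℕ} (V : Fin m → Euc d) (hV : ∀ k, V k ≠ 0) (q : Proj d) :
    dirM V hV {q} = ENNReal.ofReal (mass (List.ofFn V) q) := by
  classical
  rw [mass_ofFn, dirM, Measure.finset_sum_apply]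
  rw [ENNReal.ofReal_sum_of_nonneg (fun k _ => hext_nonneg (chi_nonneg q) _)]
  refine Finset.sum_congr rfl fun k _ => ?_
  rw [Measure.smul_apply, smul_eq_mul, Measure.dirac_apply, hext_chi (hV k) q]
  rw [Set.indicator_apply]
  simp only [Set.mem_singleton_iff, Pi.one_apply]
  split
  · rw [mul_one, ENNReal.ofReal, Real.toNNReal_eq_nnnorm_of_nonneg (norm_nonneg _), nnnorm_norm]
  · rw [mul_zero, ENNReal.ofReal_zero]

end Pieces
section Refine

variable {d : ℕ}

lemma multiset_add_cons {X : Type*} (A B : Multiset X) (a : X) :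
    A + (a ::ₘ B) = a ::ₘ (A + B) := by
  rw [add_comm, Multiset.cons_add, add_comm]

lemma isSubdivision_append_split {X Y : List (Euc d)} {P : List (List (Euc d))}
    (h : IsSubdivision (X ++ Y) P) :
    ∃ PX PY, P = PX ++ PY ∧ IsSubdivision X PX ∧ IsSubdivision Y PY := by
  induction X generalizing P with
  | nil => exact ⟨[], P, rfl, List.Forall₂.nil, h⟩
  | cons v X ih =>
      cases h with
      | cons hseg htail =>
          obtain ⟨PX, PY, rfl, hX, hY⟩ := ih htail
          exact ⟨_ :: PX, PY, rfl, List.Forall₂.cons hseg hX, hY⟩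

lemma seg_single (v : Euc d) :
    ∃ c : List ℝ, (∀ r ∈ c, 0 < r) ∧ c.sum = 1 ∧ [v] = c.map (fun r => r • v) :=
  ⟨[1], by intro r hr; simp at hr; simp [hr], by simp, by simp⟩

lemma list_sum_map_mul_left (c : List ℝ) (x : ℝ) :
    (c.map (fun r => x * r)).sum = x * c.sum := by
  induction c with
  | nil => simp
  | cons a c ih => simp [ih, mul_add]

lemma hext_chi_self {v : Euc d} (hv : v ≠ 0) :
    hext (chi (projQ (unitize v hv))) v = ‖v‖ := by
  rw [hext_chi hv, if_pos rfl]

lemma exists_mem_of_mass_pos {L : List (Euc d)} {q : Proj d} (h : 0 < mass L q) :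
    ∃ w ∈ L, hext (chi q) w ≠ 0 := by
  by_contra hcon
  push_neg at hcon
  have hz : mass L q = 0 := by
    apply List.sum_eq_zero
    intro x hx
    rcases List.mem_map.mp hx with ⟨w, hw, rfl⟩
    exact hcon w hw
  rw [hz] at h
  exact lt_irrefl _ h

lemma dir_eq_of_hext_chi_ne {w : Euc d} (hw : w ≠ 0) {q : Proj d}
    (h : hext (chi q) w ≠ 0) : projQ (unitize w hw) = q := by
  by_contra hne
  rw [hext_chi hw, if_neg hne] at h
  exact h rfl

lemma eq_smul_of_dir_eq {v w : Euc d} (hv : v ≠ 0) (hw : w ≠ 0)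
    (h : projQ (unitize w hw) = projQ (unitize v hv)) :
    w = (‖w‖ / ‖v‖) • v ∨ w = -((‖w‖ / ‖v‖) • v) := by
  have hw' : w = ‖w‖ • ((unitize w hw : Euc d)) := by
    rw [unitize_coe, smul_smul, mul_inv_cancel₀ (norm_ne_zero_iff.mpr hw), one_smul]
  rcases projQ_eq_iff.mp h with h' | h'
  · left
    conv_lhs => rw [hw']
    rw [h', unitize_coe, smul_smul, div_eq_mul_inv]
  · right
    conv_lhs => rw [hw']
    rw [h', unitize_coe, smul_neg, smul_smul, div_eq_mul_inv]

/-- The common-refinement construction: two lists of nonzero vectors with the same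
mass in every projective direction admit subdivisions related by a sign-respecting
bijection of pieces. -/
lemma rearrange_of_mass (N : ℕ) :
    ∀ L₁ L₂ : List (Euc d), L₁.length + L₂.length ≤ N →
    (∀ v ∈ L₁, v ≠ 0) → (∀ v ∈ L₂, v ≠ 0) →
    (∀ q, mass L₁ q = mass L₂ q) →
    ∃ P₁ P₂, IsSubdivision L₁ P₁ ∧ IsSubdivision L₂ P₂ ∧
      Multiset.Rel SEq (pieces P₁) (pieces P₂) := by
  induction N with
  | zero =>
      intro L₁ L₂ hlen _ _ _
      have h1 : L₁ = [] := List.length_eq_zero_iff.mp (by omega)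
      have h2 : L₂ = [] := List.length_eq_zero_iff.mp (by omega)
      subst h1; subst h2
      exact ⟨[], [], List.Forall₂.nil, List.Forall₂.nil,
        by rw [pieces_nil]; exact Multiset.Rel.zero⟩
  | succ N ih =>
      intro L₁ L₂ hlen h1 h2 hq
      cases L₁ with
      | nil =>
          have h2nil : L₂ = [] := by
            by_contra hne
            obtain ⟨w, hwmem⟩ := List.exists_mem_of_ne_nil L₂ hne
            have hw : w ≠ 0 := h2 w hwmem
            set q := projQ (unitize w hw) with hqdef
            have hle : hext (chi q) w ≤ mass L₂ q := by
              apply List.single_le_sum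
              · intro x hx
                rcases List.mem_map.mp hx with ⟨u, _, rfl⟩
                exact hext_nonneg (chi_nonneg q) u
              · exact List.mem_map_of_mem hwmem
            rw [← hq q, mass_nil, hext_chi_self hw] at hle
            have := norm_pos_iff.mpr hw
            linarith
          subst h2nil
          exact ⟨[], [], List.Forall₂.nil, List.Forall₂.nil,
            by rw [pieces_nil]; exact Multiset.Rel.zero⟩
      | cons v L₁' =>
          have hv : v ≠ 0 := h1 v List.mem_cons_self
          set q := projQ (unitize v hv) with hqdef
          have hvnorm : 0 < ‖v‖ := norm_pos_iff.mpr hv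
          have hmass2 : 0 < mass L₂ q := by
            rw [← hq q, mass_cons, hext_chi_self hv]
            have := mass_nonneg L₁' q
            linarith
          obtain ⟨w, hwmem, hwne⟩ := exists_mem_of_mass_pos hmass2
          have hw : w ≠ 0 := h2 w hwmem
          have hwnorm : 0 < ‖w‖ := norm_pos_iff.mpr hw
          have hdir : projQ (unitize w hw) = projQ (unitize v hv) :=
            (dir_eq_of_hext_chi_ne hw hwne).trans hqdef
          obtain ⟨X, Y, rfl⟩ := List.append_of_mem hwmem
          set s := ‖w‖ / ‖v‖ with hs
          have hspos : 0 < s := div_pos hwnorm hvnorm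
          have hsne : s ≠ 0 := hspos.ne'
          have hc : w = s • v ∨ w = -(s • v) := eq_smul_of_dir_eq hv hw hdir
          have hxw : ∀ f : Proj d → ℝ, hext f w = s * hext f v := by
            intro f
            rcases hc with hcw | hcw
            · rw [hcw, hext_smul, abs_of_pos hspos]
            · rw [hcw, hext_neg, hext_smul, abs_of_pos hspos]
          have h2X : ∀ u ∈ X, u ≠ 0 := fun u hu => h2 u (by simp [hu])
          have h2Y : ∀ u ∈ Y, u ≠ 0 := fun u hu => h2 u (by simp [hu])
          have h1' : ∀ u ∈ L₁', u ≠ 0 := fun u hu => h1 u (by simp [hu])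
          rcases lt_trichotomy s 1 with hs1 | hs1 | hs1
          · -- ‖w‖ < ‖v‖ : split v
            set v₂ := (1 - s) • v with hv₂def
            have hv₂ : v₂ ≠ 0 := smul_ne_zero (by linarith) hv
            have hxv₂ : ∀ f : Proj d → ℝ, hext f v₂ = (1 - s) * hext f v := by
              intro f
              rw [hv₂def, hext_smul, abs_of_pos (by linarith : (0:ℝ) < 1 - s)]
            have hmass' : ∀ q', mass (v₂ :: L₁') q' = mass (X ++ Y) q' := by
              intro q'
              have h0 := hq q'
              rw [mass_cons, mass_append, mass_cons, hxw] at h0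
              rw [mass_cons, mass_append, hxv₂]
              linarith
            obtain ⟨P₁', P₂', hP₁', hP₂', hrel⟩ := ih (v₂ :: L₁') (X ++ Y)
              (by simp only [List.length_cons, List.length_append] at hlen ⊢; omega)
              (by intro u hu
                  rcases List.mem_cons.mp hu with rfl | hu
                  · exact hv₂
                  · exact h1' u hu)
              (by intro u hu
                  rcases List.mem_append.mp hu with hu | hu
                  · exact h2X u hu
                  · exact h2Y u hu)
              hmass'
            rcases hP₁' with _ | ⟨hseg₂, hP₁''⟩
            rename_i seg₂ P₁''
            obtain ⟨c₂, hc₂pos, hc₂sum, hsegeq⟩ := hseg₂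
            obtain ⟨PX, PY, rfl, hPX, hPY⟩ := isSubdivision_append_split hP₂'
            refine ⟨((s • v) :: seg₂) :: P₁'', PX ++ [w] :: PY, ?_, ?_, ?_⟩
            · refine List.Forall₂.cons ?_ hP₁''
              refine ⟨s :: c₂.map (fun r => (1 - s) * r), ?_, ?_, ?_⟩
              · intro r hr
                rcases List.mem_cons.mp hr with rfl | hr
                · exact hspos
                · rcases List.mem_map.mp hr with ⟨r', hr', rfl⟩
                  exact mul_pos (by linarith) (hc₂pos r' hr')
              · rw [List.sum_cons, list_sum_map_mul_left, hc₂sum]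
                ring
              · rw [List.map_cons]
                congr 1
                rw [hsegeq, List.map_map]
                refine List.map_congr_left fun r hr => ?_
                show r • v₂ = ((1 - s) * r) • v
                rw [hv₂def, smul_smul, mul_comm]
            · exact List.rel_append hPX (List.Forall₂.cons (seg_single w) hPY)
            · have hL : pieces (((s • v) :: seg₂) :: P₁'')
                  = (s • v) ::ₘ ((seg₂ : Multiset (Euc d)) + pieces P₁'') := by
                rw [pieces_cons, ← Multiset.cons_coe, Multiset.cons_add]
              have hR : pieces (PX ++ [w] :: PY) = w ::ₘ (pieces PX + pieces PY) := by
                rw [pieces_append, pieces_cons, Multiset.coe_singleton,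
                  Multiset.singleton_add, multiset_add_cons]
              rw [hL, hR]
              refine Multiset.Rel.cons ?_ ?_
              · rcases hc with hcw | hcw
                · exact Or.inl hcw.symm
                · exact Or.inr (by rw [hcw, neg_neg])
              · rw [pieces_cons, pieces_append] at hrel
                exact hrel
          · -- ‖w‖ = ‖v‖
            have hcw' : SEq v w := by
              rcases hc with hcw | hcw
              · exact Or.inl (by rw [hcw, hs1, one_smul])
              · exact Or.inr (by rw [hcw, hs1, one_smul, neg_neg])
            have hmass' : ∀ q', mass L₁' q' = mass (X ++ Y) q' := by
              intro q'
              have h0 := hq q'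
              rw [mass_cons, mass_append, mass_cons, hxw, hs1] at h0
              rw [mass_append]
              linarith
            obtain ⟨P₁', P₂', hP₁', hP₂', hrel⟩ := ih L₁' (X ++ Y)
              (by simp only [List.length_cons, List.length_append] at hlen ⊢; omega)
              h1'
              (by intro u hu
                  rcases List.mem_append.mp hu with hu | hu
                  · exact h2X u hu
                  · exact h2Y u hu)
              hmass'
            obtain ⟨PX, PY, rfl, hPX, hPY⟩ := isSubdivision_append_split hP₂'
            refine ⟨[v] :: P₁', PX ++ [w] :: PY,
              List.Forall₂.cons (seg_single v) hP₁',
              List.rel_append hPX (List.Forall₂.cons (seg_single w) hPY), ?_⟩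
            have hL : pieces ([v] :: P₁') = v ::ₘ pieces P₁' := by
              rw [pieces_cons, Multiset.coe_singleton, Multiset.singleton_add]
            have hR : pieces (PX ++ [w] :: PY) = w ::ₘ (pieces PX + pieces PY) := by
              rw [pieces_append, pieces_cons, Multiset.coe_singleton,
                Multiset.singleton_add, multiset_add_cons]
            rw [hL, hR]
            refine Multiset.Rel.cons hcw' ?_
            rw [pieces_append] at hrel
            exact hrel
          · -- ‖w‖ > ‖v‖ : split w
            have hinvlt : s⁻¹ < 1 := by
              rw [inv_lt_one_iff₀]
              right; exact hs1
            have hinvpos : 0 < s⁻¹ := inv_pos.mpr hspos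
            set w₂ := (1 - s⁻¹) • w with hw₂def
            have hw₂ : w₂ ≠ 0 := smul_ne_zero (by linarith) hw
            have hxw₂ : ∀ f : Proj d → ℝ, hext f w₂ = (s - 1) * hext f v := by
              intro f
              rw [hw₂def, hext_smul, abs_of_pos (by linarith : (0:ℝ) < 1 - s⁻¹), hxw]
              field_simp
            have hmass' : ∀ q', mass L₁' q' = mass (X ++ w₂ :: Y) q' := by
              intro q'
              have h0 := hq q'
              rw [mass_cons, mass_append, mass_cons, hxw] at h0
              rw [mass_append, mass_cons, hxw₂]
              linarith
            obtain ⟨P₁', P₂', hP₁', hP₂', hrel⟩ := ih L₁' (X ++ w₂ :: Y)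
              (by simp only [List.length_cons, List.length_append] at hlen ⊢; omega)
              h1'
              (by intro u hu
                  rcases List.mem_append.mp hu with hu | hu
                  · exact h2X u hu
                  · rcases List.mem_cons.mp hu with rfl | hu
                    · exact hw₂
                    · exact h2Y u hu)
              hmass'
            obtain ⟨PX, P', rfl, hPX, hP'⟩ := isSubdivision_append_split hP₂'
            rcases hP' with _ | ⟨hseg₂, hPY⟩
            rename_i seg₂ PY
            obtain ⟨c₂, hc₂pos, hc₂sum, hsegeq⟩ := hseg₂
            refine ⟨[v] :: P₁', PX ++ ((s⁻¹ • w) :: seg₂) :: PY,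
              List.Forall₂.cons (seg_single v) hP₁', ?_, ?_⟩
            · refine List.rel_append hPX (List.Forall₂.cons ?_ hPY)
              refine ⟨s⁻¹ :: c₂.map (fun r => (1 - s⁻¹) * r), ?_, ?_, ?_⟩
              · intro r hr
                rcases List.mem_cons.mp hr with rfl | hr
                · exact hinvpos
                · rcases List.mem_map.mp hr with ⟨r', hr', rfl⟩
                  exact mul_pos (by linarith) (hc₂pos r' hr')
              · rw [List.sum_cons, list_sum_map_mul_left, hc₂sum]
                ring
              · rw [List.map_cons]
                congr 1
                rw [hsegeq, List.map_map]
                refine List.map_congr_left fun r hr => ?_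
                show r • w₂ = ((1 - s⁻¹) * r) • w
                rw [hw₂def, smul_smul, mul_comm]
            · have hL : pieces ([v] :: P₁') = v ::ₘ pieces P₁' := by
                rw [pieces_cons, Multiset.coe_singleton, Multiset.singleton_add]
              have hR : pieces (PX ++ ((s⁻¹ • w) :: seg₂) :: PY)
                  = (s⁻¹ • w) ::ₘ (pieces PX + ((seg₂ : Multiset (Euc d)) + pieces PY)) := by
                rw [pieces_append, pieces_cons, ← Multiset.cons_coe, Multiset.cons_add,
                  multiset_add_cons]
              rw [hL, hR]
              refine Multiset.Rel.cons ?_ ?_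
              · rcases hc with hcw | hcw
                · left
                  rw [hcw, smul_smul, inv_mul_cancel₀ hsne, one_smul]
                · right
                  rw [hcw, smul_neg, smul_smul, inv_mul_cancel₀ hsne, one_smul, neg_neg]
              · rw [pieces_append, pieces_cons] at hrel
                exact hrel

end Refine

/-- Two broken lines in `ℝ^d` are rearrangements of one
another if and only if they produce the same measure on `P^{d-1}`; moreover the
measure produced by a broken line is necessarily a discrete measure (a finite
linear combination of point masses). -/
theorem stmt7 {d m n : ℕ} (hd : 1 ≤ d) (hm : 1 ≤ m) (hn : 1 ≤ n)
    (A : Fin (m+1) → Euc d) (B : Fin (n+1) → Euc d)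
    (hA : ∀ k : Fin m, A k.succ ≠ A k.castSucc)
    (hB : ∀ k : Fin n, B k.succ ≠ B k.castSucc)
    (αA gA αB gB : ℝ → Euc d)
    (hαA : IsACDeriv αA gA) (hαB : IsACDeriv αB gB)
    (hvA : ∀ k : Fin (m+1), αA ((k : ℝ) / (m : ℝ)) = A k)
    (hvB : ∀ k : Fin (n+1), αB ((k : ℝ) / (n : ℝ)) = B k)
    (hgA : ∀ k : Fin m, ∀ t ∈ Ioo ((k : ℝ) / (m : ℝ)) (((k : ℝ) + 1) / (m : ℝ)),
      gA t = (m : ℝ) • (A k.succ - A k.castSucc))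
    (hgB : ∀ k : Fin n, ∀ t ∈ Ioo ((k : ℝ) / (n : ℝ)) (((k : ℝ) + 1) / (n : ℝ)),
      gB t = (n : ℝ) • (B k.succ - B k.castSucc))
    (μA μB : Measure (Proj d))
    (hμA : IsCurveMeasure gA μA) (hμB : IsCurveMeasure gB μB) :
    (Rearrangement (List.ofFn fun k : Fin m => A k.succ - A k.castSucc)
        (List.ofFn fun k : Fin n => B k.succ - B k.castSucc) ↔ μA = μB) ∧
    ∃ (N : ℕ) (p : Fin N → Proj d) (c : Fin N → ℝ≥0),
      μA = ∑ i, (c i : ℝ≥0∞) • Measure.dirac (p i) := by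
  have hm0 : 0 < m := hm
  have hn0 : 0 < n := hn
  have hVA : ∀ k : Fin m, (fun k : Fin m => A k.succ - A k.castSucc) k ≠ 0 :=
    fun k => sub_ne_zero.mpr (hA k)
  have hVB : ∀ k : Fin n, (fun k : Fin n => B k.succ - B k.castSucc) k ≠ 0 :=
    fun k => sub_ne_zero.mpr (hB k)
  have hμAeq : μA = dirM (fun k : Fin m => A k.succ - A k.castSucc) hVA :=
    curveMeasure_eq_dirM hm0 gA _ hVA hgA hμA
  have hμBeq : μB = dirM (fun k : Fin n => B k.succ - B k.castSucc) hVB :=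
    curveMeasure_eq_dirM hn0 gB _ hVB hgB hμB
  constructor
  · constructor
    · intro h
      haveI : IsFiniteMeasure μA := hμA.1
      haveI : IsFiniteMeasure μB := hμB.1
      apply MeasureTheory.ext_of_forall_lintegral_eq_of_IsFiniteMeasure
      intro f
      have hfc : Continuous fun p : Proj d => ((f p : ℝ)) :=
        NNReal.continuous_coe.comp f.continuous
      have e1 := curve_integral hm0 gA _ hgA hμA _ hfc
      have e2 := curve_integral hn0 gB _ hgB hμB _ hfc
      have e3 := sum_hext_of_rearrangement h (fun p => ((f p : ℝ)))
      rw [sum_ofFn_hext, sum_ofFn_hext] at e3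
      rw [lintegral_coe_eq_integral _ (f.integrable_of_nnreal μA),
        lintegral_coe_eq_integral _ (f.integrable_of_nnreal μB)]
      congr 1
      rw [e1, e2]
      exact e3
    · intro h
      rw [hμAeq, hμBeq] at h
      have hmass : ∀ q, mass (List.ofFn fun k : Fin m => A k.succ - A k.castSucc) q
          = mass (List.ofFn fun k : Fin n => B k.succ - B k.castSucc) q := by
        intro q
        have happ : dirM (fun k : Fin m => A k.succ - A k.castSucc) hVA {q}
            = dirM (fun k : Fin n => B k.succ - B k.castSucc) hVB {q} := by rw [h]
        rw [dirM_singleton, dirM_singleton] at happ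
        exact (ENNReal.ofReal_eq_ofReal_iff (mass_nonneg _ _) (mass_nonneg _ _)).mp happ
      obtain ⟨P₁, P₂, hs1, hs2, hrel⟩ := rearrange_of_mass
        ((List.ofFn fun k : Fin m => A k.succ - A k.castSucc).length
          + (List.ofFn fun k : Fin n => B k.succ - B k.castSucc).length)
        _ _ le_rfl
        (by intro v hv
            obtain ⟨k, rfl⟩ := List.mem_ofFn.mp hv
            exact hVA k)
        (by intro v hv
            obtain ⟨k, rfl⟩ := List.mem_ofFn.mp hv
            exact hVB k)
        hmass
      exact ⟨P₁, P₂, hs1, hs2, hrel⟩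
  · exact ⟨m, fun k => projQ (unitize _ (hVA k)),
      fun k => ‖A k.succ - A k.castSucc‖₊, hμAeq⟩
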